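/- arXiv:2105.11100 — 2 statements merged into one kernel-verified Lean document; each statement's English description precedes it below -/
import Mathlib

section
/- Let F : ℝ⁴ → ℝ⁴ be smooth, K a C¹ invariant circle with F(K(θ)) = K(θ+ω), and suppose the 4×4 matrix-valued map P(θ) (invertible for all θ) and the constant matrix Λ = [[1,T,0,0],[0,1,0,0],[0,0,λs,0],[0,0,0,λu]] with T ≠ 0 satisfy DF(K(θ))P(θ) = P(θ+ω)Λ, with the second column of P denoted v_c(θ). Then for K_new(θ) := K(θ) + (Δω/T)v_c(θ), one has F(K_new(θ)) − K_new(θ+ω+Δω) = O(Δω²) as Δω → 0, uniformly in θ. -/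
open scoped Real
open Matrix

/-- A continuous periodic function on `ℝ` is globally bounded. -/
lemma bound_of_periodic {E : Type*} [NormedAddCommGroup E] {f : ℝ → E}
    (hf : Continuous f) (hp : Function.Periodic f (2 * Real.pi)) :
    ∃ C : ℝ, 0 ≤ C ∧ ∀ x, ‖f x‖ ≤ C := by
  obtain ⟨C, hC⟩ := (isCompact_Icc (a := (0:ℝ))
    (b := 2 * Real.pi)).exists_bound_of_continuousOn hf.continuousOn
  refine ⟨max C 0, le_max_right _ _, fun x => ?_⟩
  obtain ⟨y, hy, hxy⟩ := hp.exists_mem_Ico₀ (by positivity) x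
  rw [hxy]
  exact le_trans (hC y ⟨hy.1, hy.2.le⟩) (le_max_left _ _)

/-- The derivative of a differentiable periodic function is periodic. -/
lemma periodic_fderiv {E : Type*} [NormedAddCommGroup E] [NormedSpace ℝ E]
    {f : ℝ → E} {c : ℝ} (hf : Differentiable ℝ f) (hp : Function.Periodic f c) :
    Function.Periodic (fderiv ℝ f) c := by
  intro x
  have hcomp : (f ∘ fun y : ℝ => y + c) = f := funext fun y => hp y
  have hid : fderiv ℝ (fun y : ℝ => y + c) x = ContinuousLinearMap.id ℝ ℝ :=
    ((hasFDerivAt_id x).add_const c).fderiv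
  have h := fderiv_comp (𝕜 := ℝ) x (g := f) (f := fun y : ℝ => y + c)
    (hf (x + c)) ((differentiable_id.add_const c) x)
  rw [hcomp, hid, ContinuousLinearMap.comp_id] at h
  exact h.symm

/-- Points of a segment are at distance at most the segment length from the left endpoint. -/
lemma norm_sub_le_of_mem_segment' {E : Type*} [NormedAddCommGroup E] [NormedSpace ℝ E]
    {a b x : E} (hx : x ∈ segment ℝ a b) : ‖x - a‖ ≤ ‖b - a‖ := by
  rw [segment_eq_image'] at hx
  obtain ⟨t, ht, rfl⟩ := hx
  rw [add_sub_cancel_left, norm_smul, Real.norm_eq_abs, abs_of_nonneg ht.1]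
  exact mul_le_of_le_one_left (norm_nonneg _) ht.2

/-- continuation in the rotation number. If `K, P, Λ` solve the torus and
bundle equations with constant `Λ = [[1,T,0,0],[0,1,0,0],[0,0,λs,0],[0,0,0,λu]]`, `T ≠ 0`,
and `v_c` is the second column of `P`, then `K_new(θ) = K(θ) + (Δω/T) v_c(θ)` solves the
invariance equation for rotation number `ω + Δω` up to an error `O(Δω²)`, uniformly in
`θ`. -/
theorem stmt9 (ω T lams lamu : ℝ) (hT : T ≠ 0)
    (F : (Fin 4 → ℝ) → (Fin 4 → ℝ)) (hF : ContDiff ℝ 2 F)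
    (K : ℝ → (Fin 4 → ℝ)) (hK : ContDiff ℝ 2 K)
    (hKper : Function.Periodic K (2 * Real.pi))
    (hinv : ∀ θ, F (K θ) = K (θ + ω))
    (P : ℝ → Matrix (Fin 4) (Fin 4) ℝ) (hPc : Continuous P)
    (hPper : Function.Periodic P (2 * Real.pi))
    (hPinv : ∀ θ, IsUnit (P θ).det)
    (hPcol1 : ∀ θ i, P θ i 0 = deriv K θ i)
    (Λ : Matrix (Fin 4) (Fin 4) ℝ)
    (hΛ : Λ = !![1, T, 0, 0; 0, 1, 0, 0; 0, 0, lams, 0; 0, 0, 0, lamu])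
    (hPΛ : ∀ θ (v : Fin 4 → ℝ),
      fderiv ℝ F (K θ) ((P θ).mulVec v) = (P (θ + ω)).mulVec (Λ.mulVec v))
    (vc : ℝ → (Fin 4 → ℝ)) (hvcdef : ∀ θ i, vc θ i = P θ i 1)
    (hvcC1 : ContDiff ℝ 1 vc) :
    ∃ Cb δ : ℝ, 0 < δ ∧ ∀ Δω : ℝ, |Δω| < δ → ∀ θ : ℝ,
      ‖F (K θ + (Δω / T) • vc θ) - (K (θ + ω + Δω) + (Δω / T) • vc (θ + ω + Δω))‖
        ≤ Cb * Δω ^ 2 := by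
  -- basic differentiability facts
  have hKd : Differentiable ℝ K := hK.differentiable (by norm_num)
  have hKfd : ContDiff ℝ 1 (fderiv ℝ K) := hK.fderiv_right (by norm_num)
  have hKfdd : Differentiable ℝ (fderiv ℝ K) := hKfd.differentiable one_ne_zero
  have hvcd : Differentiable ℝ vc := hvcC1.differentiable one_ne_zero
  have hFd : Differentiable ℝ F := hF.differentiable (by norm_num)
  have hFfd : ContDiff ℝ 1 (fderiv ℝ F) := hF.fderiv_right (by norm_num)
  have hFfdd : Differentiable ℝ (fderiv ℝ F) := hFfd.differentiable one_ne_zero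
  -- periodicity of vc
  have hvcper : Function.Periodic vc (2 * Real.pi) := by
    intro x; funext i; rw [hvcdef, hvcdef, hPper x]
  -- global bounds from periodicity
  obtain ⟨Cvc, hCvc0, hCvc⟩ := bound_of_periodic hvcC1.continuous hvcper
  obtain ⟨RK, hRK0, hRK⟩ := bound_of_periodic hK.continuous hKper
  obtain ⟨CK2, hCK20, hCK2⟩ := bound_of_periodic
    (hKfd.continuous_fderiv one_ne_zero) (periodic_fderiv hKfdd (periodic_fderiv hKd hKper))
  obtain ⟨Lvc, hLvc0, hLvc⟩ := bound_of_periodic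
    (hvcC1.continuous_fderiv one_ne_zero) (periodic_fderiv hvcd hvcper)
  -- bound on the second derivative of F on a compact ball
  obtain ⟨M2', hM2'⟩ := (isCompact_closedBall (0 : Fin 4 → ℝ)
    (RK + 1)).exists_bound_of_continuousOn
    ((hFfd.continuous_fderiv one_ne_zero).continuousOn)
  set M2 : ℝ := max M2' 0 with hM2def
  have hM20 : 0 ≤ M2 := le_max_right _ _
  have hM2 : ∀ x ∈ Metric.closedBall (0 : Fin 4 → ℝ) (RK + 1),
      ‖fderiv ℝ (fderiv ℝ F) x‖ ≤ M2 := fun x hx => le_trans (hM2' x hx) (le_max_left _ _)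
  -- Lipschitz bound for fderiv F on the ball
  have hFLip : ∀ x ∈ Metric.closedBall (0 : Fin 4 → ℝ) (RK + 1),
      ∀ y ∈ Metric.closedBall (0 : Fin 4 → ℝ) (RK + 1),
      ‖fderiv ℝ F y - fderiv ℝ F x‖ ≤ M2 * ‖y - x‖ := fun x hx y hy =>
    (convex_closedBall _ _).norm_image_sub_le_of_norm_fderiv_le
      (fun z _ => hFfdd z) hM2 hx hy
  -- Lipschitz bounds for fderiv K and vc (global)
  have hKLip : ∀ x y : ℝ, ‖fderiv ℝ K y - fderiv ℝ K x‖ ≤ CK2 * ‖y - x‖ := fun x y =>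
    convex_univ.norm_image_sub_le_of_norm_fderiv_le
      (fun z _ => hKfdd z) (fun z _ => hCK2 z) trivial trivial
  have hvcLip : ∀ x y : ℝ, ‖vc y - vc x‖ ≤ Lvc * ‖y - x‖ := fun x y =>
    convex_univ.norm_image_sub_le_of_norm_fderiv_le
      (fun z _ => hvcd z) (fun z _ => hLvc z) trivial trivial
  refine ⟨M2 * (Cvc / |T|) ^ 2 + CK2 + Lvc / |T|, |T| / (Cvc + 1), by positivity, ?_⟩
  intro Δω hΔω θ
  set s : ℝ := Δω / T with hsdef
  set a : Fin 4 → ℝ := K θ with hadef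
  set h : Fin 4 → ℝ := s • vc θ with hhdef
  set t : ℝ := θ + ω with htdef
  have habs : |s| = |Δω| / |T| := by rw [hsdef, abs_div]
  have hT0 : (0:ℝ) < |T| := abs_pos.mpr hT
  -- smallness of h
  have hhn : ‖h‖ ≤ |Δω| / |T| * Cvc := by
    rw [hhdef, norm_smul, Real.norm_eq_abs, habs]
    exact mul_le_mul_of_nonneg_left (hCvc θ) (by positivity)
  have hh1 : ‖h‖ ≤ 1 := by
    refine le_trans hhn ?_
    rw [div_mul_eq_mul_div, div_le_one hT0]
    have h1 : |Δω| * Cvc ≤ |Δω| * (Cvc + 1) := by nlinarith [abs_nonneg Δω]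
    have h2 : |Δω| * (Cvc + 1) < |T| := by
      rw [← lt_div_iff₀ (by positivity)] at *
      exact hΔω
    linarith
  -- membership in the ball
  have hamem : a ∈ Metric.closedBall (0 : Fin 4 → ℝ) (RK + 1) := by
    rw [Metric.mem_closedBall, dist_zero_right]
    exact le_trans (hRK θ) (by linarith)
  have hahmem : a + h ∈ Metric.closedBall (0 : Fin 4 → ℝ) (RK + 1) := by
    rw [Metric.mem_closedBall, dist_zero_right]
    calc ‖a + h‖ ≤ ‖a‖ + ‖h‖ := norm_add_le _ _
    _ ≤ RK + 1 := add_le_add (hRK θ) hh1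
  -- the key derivative identity
  have hPv : (P θ).mulVec (Pi.single 1 s) = s • vc θ := by
    funext i
    simp [Matrix.mulVec, dotProduct, Fin.sum_univ_four, Pi.single_apply, hvcdef, mul_comm]
  have hkey : fderiv ℝ F a h = fderiv ℝ K t Δω + s • vc t := by
    have h1 := hPΛ θ (Pi.single 1 s)
    rw [hPv] at h1
    rw [hhdef, h1]
    have hfd : fderiv ℝ K t Δω = Δω • deriv K t := by
      rw [← toSpanSingleton_deriv]; simp
    funext i
    have hsT : T * s = Δω := by rw [hsdef]; field_simp
    simp only [hΛ, Matrix.mulVec, dotProduct, Fin.sum_univ_four, Pi.single_apply, hfd]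
    norm_num [Matrix.cons_val_zero, Matrix.cons_val_one, Matrix.head_cons, hvcdef, hPcol1,
      Pi.add_apply, Pi.smul_apply, smul_eq_mul, htdef]
    norm_num [Matrix.vecHead, Matrix.vecTail, Fin.ext_iff]
    rw [hsT]
    change _ + _ + P (θ + ω) i 2 * (0 * s) + P (θ + ω) i 3 * (0 * s) = _
    ring
  -- decomposition of the error
  have hdecomp : F (a + h) - (K (t + Δω) + s • vc (t + Δω)) =
      (F (a + h) - F a - fderiv ℝ F a h)
      - (K (t + Δω) - K t - fderiv ℝ K t Δω)
      - s • (vc (t + Δω) - vc t) := by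
    rw [hkey, hinv θ]
    simp only [← htdef]
    module
  -- estimate the three pieces
  have hA : ‖F (a + h) - F a - fderiv ℝ F a h‖ ≤ M2 * ‖h‖ * ‖h‖ := by
    have hsub : segment ℝ a (a + h) ⊆ Metric.closedBall (0 : Fin 4 → ℝ) (RK + 1) :=
      (convex_closedBall _ _).segment_subset hamem hahmem
    have := (convex_segment a (a + h)).norm_image_sub_le_of_norm_fderiv_le'
      (f := F) (φ := fderiv ℝ F a) (C := M2 * ‖h‖)
      (fun x _ => hFd x)
      (fun x hx => by
        refine le_trans (hFLip a hamem x (hsub hx)) ?_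
        exact mul_le_mul_of_nonneg_left (by simpa using norm_sub_le_of_mem_segment' hx) hM20)
      (left_mem_segment ℝ a (a + h)) (right_mem_segment ℝ a (a + h))
    simpa [add_sub_cancel_left] using this
  have hB : ‖K (t + Δω) - K t - fderiv ℝ K t Δω‖ ≤ CK2 * Δω ^ 2 := by
    have := (convex_segment t (t + Δω)).norm_image_sub_le_of_norm_fderiv_le'
      (f := K) (φ := fderiv ℝ K t) (C := CK2 * |Δω|)
      (fun x _ => hKd x)
      (fun x hx => by
        refine le_trans (hKLip t x) ?_
        refine mul_le_mul_of_nonneg_left ?_ hCK20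
        have := norm_sub_le_of_mem_segment' hx
        simpa [Real.norm_eq_abs] using this)
      (left_mem_segment ℝ t (t + Δω)) (right_mem_segment ℝ t (t + Δω))
    simp only [add_sub_cancel_left] at this
    calc ‖K (t + Δω) - K t - fderiv ℝ K t Δω‖ ≤ CK2 * |Δω| * ‖Δω‖ := this
    _ = CK2 * Δω ^ 2 := by rw [Real.norm_eq_abs, mul_assoc, abs_mul_abs_self]; ring
  have hC : ‖s • (vc (t + Δω) - vc t)‖ ≤ Lvc / |T| * Δω ^ 2 := by
    rw [norm_smul, Real.norm_eq_abs, habs]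
    have h1 : ‖vc (t + Δω) - vc t‖ ≤ Lvc * |Δω| := by
      have := hvcLip t (t + Δω)
      simpa [Real.norm_eq_abs] using this
    calc |Δω| / |T| * ‖vc (t + Δω) - vc t‖ ≤ |Δω| / |T| * (Lvc * |Δω|) :=
      mul_le_mul_of_nonneg_left h1 (by positivity)
    _ = Lvc / |T| * (|Δω| * |Δω|) := by ring
    _ = Lvc / |T| * Δω ^ 2 := by rw [abs_mul_abs_self]; ring
  -- conclude
  have hAfin : ‖F (a + h) - F a - fderiv ℝ F a h‖ ≤ M2 * (Cvc / |T|) ^ 2 * Δω ^ 2 := by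
    refine le_trans hA ?_
    have h2 : ‖h‖ ≤ Cvc / |T| * |Δω| := by
      refine le_trans hhn (le_of_eq ?_); ring
    have hn0 : (0:ℝ) ≤ ‖h‖ := norm_nonneg _
    have h3 : M2 * ‖h‖ * ‖h‖ ≤ M2 * ((Cvc / |T| * |Δω|) * (Cvc / |T| * |Δω|)) := by
      calc M2 * ‖h‖ * ‖h‖ = M2 * (‖h‖ * ‖h‖) := by ring
        _ ≤ M2 * ((Cvc / |T| * |Δω|) * (Cvc / |T| * |Δω|)) :=
          mul_le_mul_of_nonneg_left (mul_le_mul h2 h2 hn0 (hn0.trans h2)) hM20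
    refine le_trans h3 (le_of_eq ?_)
    rw [show (Cvc / |T| * |Δω|) * (Cvc / |T| * |Δω|) = (Cvc / |T|)^2 * (|Δω| * |Δω|) by ring,
      abs_mul_abs_self]
    ring
  have hEq : F (K θ + (Δω / T) • vc θ) - (K (θ + ω + Δω) + (Δω / T) • vc (θ + ω + Δω)) =
      F (a + h) - (K (t + Δω) + s • vc (t + Δω)) := by
    rw [hadef, hhdef, hsdef, htdef]
  rw [hEq, hdecomp]
  calc ‖(F (a + h) - F a - fderiv ℝ F a h) - (K (t + Δω) - K t - fderiv ℝ K t Δω)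
        - s • (vc (t + Δω) - vc t)‖
      ≤ ‖(F (a + h) - F a - fderiv ℝ F a h) - (K (t + Δω) - K t - fderiv ℝ K t Δω)‖
        + ‖s • (vc (t + Δω) - vc t)‖ := norm_sub_le _ _
    _ ≤ ‖F (a + h) - F a - fderiv ℝ F a h‖ + ‖K (t + Δω) - K t - fderiv ℝ K t Δω‖
        + ‖s • (vc (t + Δω) - vc t)‖ := by
        have := norm_sub_le (F (a + h) - F a - fderiv ℝ F a h)
          (K (t + Δω) - K t - fderiv ℝ K t Δω)
        linarith
    _ ≤ M2 * (Cvc / |T|) ^ 2 * Δω ^ 2 + CK2 * Δω ^ 2 + Lvc / |T| * Δω ^ 2 := by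
        exact add_le_add (add_le_add hAfin hB) hC
    _ = (M2 * (Cvc / |T|) ^ 2 + CK2 + Lvc / |T|) * Δω ^ 2 := by ring
end

section
/- Let F, K, P, Λ, E_red be as above and suppose Q : 𝕋 → ℝ^{4×4} and ΔΛ : 𝕋 → ℝ^{4×4} solve −E_red(θ) = Λ(θ)Q(θ) − Q(θ+ω)Λ(θ) − ΔΛ(θ), and suppose I + Q(θ) is invertible for all θ. Then the new reducibility error E_red,new(θ) := [P(θ+ω)(I+Q(θ+ω))]⁻¹ DF(K(θ)) P(θ)(I+Q(θ)) − (Λ(θ)+ΔΛ(θ)) satisfies E_red,new(θ) = (I+Q(θ+ω))⁻¹ [E_red(θ)Q(θ) − Q(θ+ω)ΔΛ(θ)]. In particular sup‖E_red,new‖ ≤ sup‖(I+Q)⁻¹‖ · (sup‖E_red‖·sup‖Q‖ + sup‖Q‖·sup‖ΔΛ‖). -/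
open scoped Real
open Matrix

/-- The operator norm of a `4×4` real matrix acting on `Fin 4 → ℝ` by `mulVec`. -/
noncomputable def opNorm (M : Matrix (Fin 4) (Fin 4) ℝ) : ℝ :=
  ‖(LinearMap.toContinuousLinearMap (Matrix.mulVecLin M) :
      (Fin 4 → ℝ) →L[ℝ] (Fin 4 → ℝ))‖

/-- The map `M ↦ mulVecLin M` as a linear map into continuous linear maps. -/
noncomputable def opNormAuxT : Matrix (Fin 4) (Fin 4) ℝ →ₗ[ℝ]
    ((Fin 4 → ℝ) →L[ℝ] (Fin 4 → ℝ)) where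
  toFun M := LinearMap.toContinuousLinearMap (Matrix.mulVecLin M)
  map_add' M N := by ext v; simp [Matrix.add_mulVec]
  map_smul' c M := by ext v; simp [Matrix.smul_mulVec]

lemma opNorm_eq (M : Matrix (Fin 4) (Fin 4) ℝ) : opNorm M = ‖opNormAuxT M‖ := rfl

lemma opNorm_nonneg (M : Matrix (Fin 4) (Fin 4) ℝ) : 0 ≤ opNorm M := norm_nonneg _

lemma opNorm_continuous : Continuous opNorm :=
  continuous_norm.comp (LinearMap.continuous_of_finiteDimensional opNormAuxT)

lemma opNorm_mul_le (A B : Matrix (Fin 4) (Fin 4) ℝ) :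
    opNorm (A * B) ≤ opNorm A * opNorm B := by
  have h : opNormAuxT (A * B) = (opNormAuxT A).comp (opNormAuxT B) := by
    ext v
    simp [opNormAuxT, Matrix.mulVecLin_mul]
  rw [opNorm_eq, h]
  exact ContinuousLinearMap.opNorm_comp_le _ _

lemma opNorm_sub_le (A B : Matrix (Fin 4) (Fin 4) ℝ) :
    opNorm (A - B) ≤ opNorm A + opNorm B := by
  have h : opNormAuxT (A - B) = opNormAuxT A - opNormAuxT B := map_sub _ _ _
  rw [opNorm_eq, h]
  exact norm_sub_le _ _

lemma bddAbove_of_periodic {f : ℝ → ℝ} (hc : Continuous f)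
    (hp : Function.Periodic f (2 * Real.pi)) : BddAbove (Set.range f) := by
  rw [← hp.image_Icc Real.two_pi_pos 0]
  exact (isCompact_Icc.image hc).bddAbove

lemma cont_matrix_inv {f : ℝ → Matrix (Fin 4) (Fin 4) ℝ} (hf : Continuous f)
    (h : ∀ θ, IsUnit (f θ).det) : Continuous fun θ => (f θ)⁻¹ := by
  simp_rw [Matrix.inv_def, Ring.inverse_eq_inv']
  exact ((hf.matrix_det.inv₀ fun θ => (h θ).ne_zero).smul hf.matrix_adjugate)

/-- quadratic reduction of the reducibility error. If `Q, ΔΛ` solve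
`−E_red(θ) = Λ(θ)Q(θ) − Q(θ+ω)Λ(θ) − ΔΛ(θ)` and `I + Q(θ)` is invertible, then
`E_red,new(θ) = (I+Q(θ+ω))⁻¹ [E_red(θ)Q(θ) − Q(θ+ω)ΔΛ(θ)]`, and in particular
`sup‖E_red,new‖ ≤ sup‖(I+Q)⁻¹‖ (sup‖E_red‖ sup‖Q‖ + sup‖Q‖ sup‖ΔΛ‖)`. -/
theorem stmt14 (ω : ℝ)
    (F : (Fin 4 → ℝ) → (Fin 4 → ℝ)) (hF : ContDiff ℝ 1 F)
    (K : ℝ → (Fin 4 → ℝ)) (hKc : Continuous K)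
    (hKper : Function.Periodic K (2 * Real.pi))
    (DFm : ℝ → Matrix (Fin 4) (Fin 4) ℝ)
    (hDFm : ∀ θ (v : Fin 4 → ℝ), fderiv ℝ F (K θ) v = (DFm θ).mulVec v)
    (hDFmc : Continuous DFm) (hDFmper : Function.Periodic DFm (2 * Real.pi))
    (P : ℝ → Matrix (Fin 4) (Fin 4) ℝ) (hPc : Continuous P)
    (hPper : Function.Periodic P (2 * Real.pi))
    (hPinv : ∀ θ, IsUnit (P θ).det)
    (Λ : ℝ → Matrix (Fin 4) (Fin 4) ℝ) (hΛc : Continuous Λ)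
    (hΛper : Function.Periodic Λ (2 * Real.pi))
    (Ered : ℝ → Matrix (Fin 4) (Fin 4) ℝ)
    (hEred : ∀ θ, Ered θ = (P (θ + ω))⁻¹ * DFm θ * P θ - Λ θ)
    (Q ΔΛ : ℝ → Matrix (Fin 4) (Fin 4) ℝ)
    (hQc : Continuous Q) (hQper : Function.Periodic Q (2 * Real.pi))
    (hΔΛc : Continuous ΔΛ) (hΔΛper : Function.Periodic ΔΛ (2 * Real.pi))
    (hQeq : ∀ θ, -Ered θ = Λ θ * Q θ - Q (θ + ω) * Λ θ - ΔΛ θ)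
    (hQinv : ∀ θ, IsUnit (1 + Q θ))
    (Erednew : ℝ → Matrix (Fin 4) (Fin 4) ℝ)
    (hErednew : ∀ θ, Erednew θ
      = (P (θ + ω) * (1 + Q (θ + ω)))⁻¹ * DFm θ * (P θ * (1 + Q θ)) - (Λ θ + ΔΛ θ)) :
    (∀ θ, Erednew θ = (1 + Q (θ + ω))⁻¹ * (Ered θ * Q θ - Q (θ + ω) * ΔΛ θ)) ∧
    (⨆ θ : ℝ, opNorm (Erednew θ))
      ≤ (⨆ θ : ℝ, opNorm ((1 + Q θ)⁻¹))
        * ((⨆ θ : ℝ, opNorm (Ered θ)) * (⨆ θ : ℝ, opNorm (Q θ))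
          + (⨆ θ : ℝ, opNorm (Q θ)) * (⨆ θ : ℝ, opNorm (ΔΛ θ))) := by
  have hQdet : ∀ θ, IsUnit (1 + Q θ).det := fun θ =>
    (Matrix.isUnit_iff_isUnit_det _).mp (hQinv θ)
  have key : ∀ θ, Erednew θ = (1 + Q (θ + ω))⁻¹ * (Ered θ * Q θ - Q (θ + ω) * ΔΛ θ) := by
    intro θ
    have hA : (1 + Q (θ + ω))⁻¹ * (1 + Q (θ + ω)) = 1 :=
      Matrix.nonsing_inv_mul _ (hQdet _)
    have h1 : (P (θ + ω))⁻¹ * DFm θ * P θ = Ered θ + Λ θ := by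
      rw [hEred θ]; noncomm_ring
    have hE : Ered θ = -(Λ θ * Q θ - Q (θ + ω) * Λ θ - ΔΛ θ) :=
      neg_eq_iff_eq_neg.mp (hQeq θ)
    have hsplit : (Ered θ + Λ θ) * (1 + Q θ)
        = (Ered θ * Q θ - Q (θ + ω) * ΔΛ θ) + (1 + Q (θ + ω)) * (Λ θ + ΔΛ θ) := by
      rw [hE]; noncomm_ring
    calc Erednew θ
        = (1 + Q (θ + ω))⁻¹ * ((P (θ + ω))⁻¹ * DFm θ * P θ) * (1 + Q θ)
            - (Λ θ + ΔΛ θ) := by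
          rw [hErednew θ, Matrix.mul_inv_rev]; noncomm_ring
      _ = (1 + Q (θ + ω))⁻¹ * ((Ered θ + Λ θ) * (1 + Q θ)) - (Λ θ + ΔΛ θ) := by
          rw [h1, mul_assoc]
      _ = (1 + Q (θ + ω))⁻¹ * (Ered θ * Q θ - Q (θ + ω) * ΔΛ θ)
            + ((1 + Q (θ + ω))⁻¹ * (1 + Q (θ + ω))) * (Λ θ + ΔΛ θ)
            - (Λ θ + ΔΛ θ) := by
          rw [hsplit, mul_add, ← mul_assoc]
      _ = (1 + Q (θ + ω))⁻¹ * (Ered θ * Q θ - Q (θ + ω) * ΔΛ θ) := by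
          rw [hA, one_mul, add_sub_cancel_right]
  refine ⟨key, ?_⟩
  -- continuity facts
  have hIQc : Continuous fun θ => 1 + Q θ := continuous_const.add hQc
  have hIQinvc : Continuous fun θ => (1 + Q θ)⁻¹ := cont_matrix_inv hIQc hQdet
  have hPinvc : Continuous fun θ => (P θ)⁻¹ := cont_matrix_inv hPc hPinv
  have hEredc : Continuous Ered := by
    have : Continuous fun θ =>
        (P (θ + ω))⁻¹ * DFm θ * P θ - Λ θ :=
      (((hPinvc.comp (continuous_id.add continuous_const)).matrix_mul
        hDFmc).matrix_mul hPc).sub hΛc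
    exact (funext hEred : Ered = _) ▸ this
  have hEredper : Function.Periodic Ered (2 * Real.pi) := by
    intro θ
    rw [hEred, hEred θ, show θ + 2 * Real.pi + ω = (θ + ω) + 2 * Real.pi by ring,
      hPper (θ + ω), hDFmper θ, hPper θ, hΛper θ]
  have hErednewc : Continuous Erednew := by
    have : Continuous fun θ =>
        (1 + Q (θ + ω))⁻¹ * (Ered θ * Q θ - Q (θ + ω) * ΔΛ θ) := by
      have hcω : Continuous fun θ : ℝ => θ + ω := continuous_id.add continuous_const
      exact (hIQinvc.comp hcω).matrix_mul
        ((hEredc.matrix_mul hQc).sub ((hQc.comp hcω).matrix_mul hΔΛc))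
    exact (funext key : Erednew = _) ▸ this
  have hErednewper : Function.Periodic Erednew (2 * Real.pi) := by
    intro θ
    rw [key, key θ, show θ + 2 * Real.pi + ω = (θ + ω) + 2 * Real.pi by ring,
      hQper (θ + ω), hEredper θ, hQper θ, hΔΛper θ]
  -- boundedness of the sup families
  have bddN : ∀ (f : ℝ → Matrix (Fin 4) (Fin 4) ℝ), Continuous f →
      Function.Periodic f (2 * Real.pi) →
      BddAbove (Set.range fun θ => opNorm (f θ)) := by
    intro f hc hp
    exact bddAbove_of_periodic (opNorm_continuous.comp hc)
      (fun θ => congrArg opNorm (hp θ))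
  have hIQinvper : Function.Periodic (fun θ => (1 + Q θ)⁻¹) (2 * Real.pi) := by
    intro θ
    show (1 + Q (θ + 2 * Real.pi))⁻¹ = (1 + Q θ)⁻¹
    rw [hQper θ]
  have bA := bddN _ hIQinvc hIQinvper
  have bE := bddN _ hEredc hEredper
  have bQ := bddN _ hQc hQper
  have bD := bddN _ hΔΛc hΔΛper
  set SA := ⨆ θ : ℝ, opNorm ((1 + Q θ)⁻¹) with hSA
  set SE := ⨆ θ : ℝ, opNorm (Ered θ) with hSE
  set SQ := ⨆ θ : ℝ, opNorm (Q θ) with hSQ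
  set SD := ⨆ θ : ℝ, opNorm (ΔΛ θ) with hSD
  have hSAge : ∀ θ, opNorm ((1 + Q θ)⁻¹) ≤ SA := fun θ => le_ciSup bA θ
  have hSEge : ∀ θ, opNorm (Ered θ) ≤ SE := fun θ => le_ciSup bE θ
  have hSQge : ∀ θ, opNorm (Q θ) ≤ SQ := fun θ => le_ciSup bQ θ
  have hSDge : ∀ θ, opNorm (ΔΛ θ) ≤ SD := fun θ => le_ciSup bD θ
  have hSA0 : 0 ≤ SA := le_trans (opNorm_nonneg _) (hSAge 0)
  have hSE0 : 0 ≤ SE := le_trans (opNorm_nonneg _) (hSEge 0)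
  have hSQ0 : 0 ≤ SQ := le_trans (opNorm_nonneg _) (hSQge 0)
  have hSD0 : 0 ≤ SD := le_trans (opNorm_nonneg _) (hSDge 0)
  refine ciSup_le fun θ => ?_
  rw [key θ]
  calc opNorm ((1 + Q (θ + ω))⁻¹ * (Ered θ * Q θ - Q (θ + ω) * ΔΛ θ))
      ≤ opNorm ((1 + Q (θ + ω))⁻¹) * opNorm (Ered θ * Q θ - Q (θ + ω) * ΔΛ θ) :=
        opNorm_mul_le _ _
    _ ≤ opNorm ((1 + Q (θ + ω))⁻¹)
          * (opNorm (Ered θ) * opNorm (Q θ) + opNorm (Q (θ + ω)) * opNorm (ΔΛ θ)) := by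
        refine mul_le_mul_of_nonneg_left ?_ (opNorm_nonneg _)
        exact le_trans (opNorm_sub_le _ _)
          (add_le_add (opNorm_mul_le _ _) (opNorm_mul_le _ _))
    _ ≤ SA * (SE * SQ + SQ * SD) := by
        refine mul_le_mul (hSAge (θ + ω)) ?_ ?_ hSA0
        · exact add_le_add
            (mul_le_mul (hSEge θ) (hSQge θ) (opNorm_nonneg _) hSE0)
            (mul_le_mul (hSQge (θ + ω)) (hSDge θ) (opNorm_nonneg _) hSQ0)
        · exact add_nonneg (mul_nonneg (opNorm_nonneg _) (opNorm_nonneg _))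
            (mul_nonneg (opNorm_nonneg _) (opNorm_nonneg _))
end
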